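/- If a unit vector v in the Hilbert tensor product H₁ ⊗ H₂ is cyclic for the first factor, then the algebra of the second factor is maximally correlated with the algebra of the first factor in the state v. -/

import Mathlib

open scoped InnerProductSpace

noncomputable section

/-- The (completed) Hilbert tensor product of two complex Hilbert spaces `H₁`, `H₂`,
presented as a Hilbert space `H` together with a bilinear map `tmul` (elementary tensors)
whose inner products multiply, whose elementary tensors span a dense subspace, and together
with the tensor product `map A B = A ⊗ B` of bounded operators. -/
structure HilbertTensor (H₁ H₂ H : Type*)
    [NormedAddCommGroup H₁] [InnerProductSpace ℂ H₁] [CompleteSpace H₁]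
    [NormedAddCommGroup H₂] [InnerProductSpace ℂ H₂] [CompleteSpace H₂]
    [NormedAddCommGroup H] [InnerProductSpace ℂ H] [CompleteSpace H] where
  tmul : H₁ →ₗ[ℂ] H₂ →ₗ[ℂ] H
  inner_tmul : ∀ x₁ y₁ x₂ y₂, ⟪tmul x₁ y₁, tmul x₂ y₂⟫_ℂ = ⟪x₁, x₂⟫_ℂ * ⟪y₁, y₂⟫_ℂ
  dense_span : Dense (↑(Submodule.span ℂ {z : H | ∃ x y, z = tmul x y}) : Set H)
  map : (H₁ →L[ℂ] H₁) → (H₂ →L[ℂ] H₂) → (H →L[ℂ] H)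
  map_tmul : ∀ A B x y, map A B (tmul x y) = tmul (A x) (B y)

variable {H₁ H₂ H : Type*}
  [NormedAddCommGroup H₁] [InnerProductSpace ℂ H₁] [CompleteSpace H₁]
  [NormedAddCommGroup H₂] [InnerProductSpace ℂ H₂] [CompleteSpace H₂]
  [NormedAddCommGroup H] [InnerProductSpace ℂ H] [CompleteSpace H]

/-- `v` is cyclic for the first factor: `{(A ⊗ I) v : A bounded on H₁}` is dense in `H`. -/
def HilbertTensor.CyclicFst (T : HilbertTensor H₁ H₂ H) (v : H) : Prop :=
  Dense (Set.range fun A : H₁ →L[ℂ] H₁ => T.map A 1 v)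

/-- An orthogonal projection on a Hilbert space: a self-adjoint idempotent bounded operator. -/
def IsONProj {E : Type*} [NormedAddCommGroup E] [InnerProductSpace ℂ E] [CompleteSpace E]
    (P : E →L[ℂ] E) : Prop :=
  IsSelfAdjoint P ∧ P ∘L P = P

/-- The algebra of the second factor is maximally correlated with the algebra of the first
factor in the state `v`. -/
def HilbertTensor.MaxCorrSndFst (T : HilbertTensor H₁ H₂ H) (v : H) : Prop :=
  ∀ P' : H₂ →L[ℂ] H₂, IsONProj P' → P' ≠ 0 → ∀ ε : ℝ, 0 < ε →
    ∃ P : H₁ →L[ℂ] H₁, IsONProj P ∧ P ≠ 0 ∧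
      0 < (⟪v, T.map P 1 v⟫_ℂ).re ∧
      (1 - ε) * (⟪v, T.map P 1 v⟫_ℂ).re ≤ (⟪v, T.map P P' v⟫_ℂ).re

/-- The orthogonal projection onto the span of a vector, as an operator `E →L[ℂ] E`. -/
def projSpan {E : Type*} [NormedAddCommGroup E] [InnerProductSpace ℂ E] [CompleteSpace E]
    (w : E) : E →L[ℂ] E :=
  (ℂ ∙ w).subtypeL ∘L Submodule.orthogonalProjection (ℂ ∙ w)

namespace HilbertTensor

variable (T : HilbertTensor H₁ H₂ H)

lemma norm_tmul (x : H₁) (y : H₂) : ‖T.tmul x y‖ = ‖x‖ * ‖y‖ := by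
  have h : ⟪T.tmul x y, T.tmul x y⟫_ℂ = ⟪x, x⟫_ℂ * ⟪y, y⟫_ℂ := T.inner_tmul x y x y
  rw [inner_self_eq_norm_sq_to_K, inner_self_eq_norm_sq_to_K, inner_self_eq_norm_sq_to_K] at h
  have h2 : (‖T.tmul x y‖ : ℝ) ^ 2 = (‖x‖ * ‖y‖) ^ 2 := by
    rw [mul_pow]; exact_mod_cast h
  calc ‖T.tmul x y‖ = Real.sqrt (‖T.tmul x y‖ ^ 2) := (Real.sqrt_sq (norm_nonneg _)).symm
    _ = Real.sqrt ((‖x‖ * ‖y‖) ^ 2) := by rw [h2]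
    _ = ‖x‖ * ‖y‖ := Real.sqrt_sq (by positivity)

lemma ext_clm {E : Type*} [NormedAddCommGroup E] [NormedSpace ℂ E]
    {f g : H →L[ℂ] E} (h : ∀ x y, f (T.tmul x y) = g (T.tmul x y)) : f = g := by
  refine ContinuousLinearMap.ext_on T.dense_span ?_
  rintro z ⟨x, y, rfl⟩
  exact h x y

lemma ext_vec {z z' : H} (h : ∀ x y, ⟪T.tmul x y, z⟫_ℂ = ⟪T.tmul x y, z'⟫_ℂ) : z = z' := by
  have hd : ∀ x y, ⟪T.tmul x y, z - z'⟫_ℂ = 0 := by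
    intro x y; rw [inner_sub_right, h, sub_self]
  have hspan : ∀ u ∈ Submodule.span ℂ {u : H | ∃ x y, u = T.tmul x y}, ⟪u, z - z'⟫_ℂ = 0 := by
    intro u hu
    induction hu using Submodule.span_induction with
    | mem u hu => obtain ⟨x, y, rfl⟩ := hu; exact hd x y
    | zero => simp
    | add u v _ _ hu hv => rw [inner_add_left, hu, hv, add_zero]
    | smul c u _ hu => rw [inner_smul_left, hu, mul_zero]
  have hcl : IsClosed {u : H | ⟪u, z - z'⟫_ℂ = 0} :=
    isClosed_eq (Continuous.inner continuous_id continuous_const) continuous_const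
  have hall : ∀ u : H, ⟪u, z - z'⟫_ℂ = 0 := by
    intro u
    have hu : u ∈ closure (↑(Submodule.span ℂ {u : H | ∃ x y, u = T.tmul x y}) : Set H) := by
      rw [T.dense_span.closure_eq]; trivial
    exact closure_minimal (fun s hs => hspan s hs) hcl hu
  have h0 : z - z' = 0 := inner_self_eq_zero.mp (hall (z - z'))
  exact sub_eq_zero.mp h0

lemma map_comp (A A' : H₁ →L[ℂ] H₁) (B B' : H₂ →L[ℂ] H₂) :
    T.map A B ∘L T.map A' B' = T.map (A ∘L A') (B ∘L B') :=
  T.ext_clm fun x y => by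
    simp [ContinuousLinearMap.comp_apply, T.map_tmul]

lemma map_adjoint_inner (A : H₁ →L[ℂ] H₁) (B : H₂ →L[ℂ] H₂) (z w : H) :
    ⟪T.map A B z, w⟫_ℂ =
      ⟪z, T.map (ContinuousLinearMap.adjoint A) (ContinuousLinearMap.adjoint B) w⟫_ℂ := by
  have h2 : ∀ (x : H₁) (y : H₂) (w : H),
      ⟪T.map A B (T.tmul x y), w⟫_ℂ =
        ⟪T.tmul x y, T.map (ContinuousLinearMap.adjoint A) (ContinuousLinearMap.adjoint B) w⟫_ℂ := by
    intro x y w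
    have hf : innerSL ℂ (T.map A B (T.tmul x y)) =
        (innerSL ℂ (T.tmul x y)).comp
          (T.map (ContinuousLinearMap.adjoint A) (ContinuousLinearMap.adjoint B)) := by
      apply T.ext_clm; intro x' y'
      simp only [innerSL_apply_apply, ContinuousLinearMap.comp_apply, T.map_tmul, T.inner_tmul]
      rw [ContinuousLinearMap.adjoint_inner_right, ContinuousLinearMap.adjoint_inner_right]
    exact DFunLike.congr_fun hf w
  have h3 : (innerSL ℂ w).comp (T.map A B) =
      innerSL ℂ (T.map (ContinuousLinearMap.adjoint A) (ContinuousLinearMap.adjoint B) w) := by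
    apply T.ext_clm; intro x y
    simp only [innerSL_apply_apply, ContinuousLinearMap.comp_apply]
    rw [← inner_conj_symm, h2, inner_conj_symm]
  have h4 : ⟪w, T.map A B z⟫_ℂ =
      ⟪T.map (ContinuousLinearMap.adjoint A) (ContinuousLinearMap.adjoint B) w, z⟫_ℂ :=
    DFunLike.congr_fun h3 z
  have h5 := congr_arg (starRingEnd ℂ) h4
  rwa [inner_conj_symm, inner_conj_symm] at h5

/-- The partial inner product (contraction) of `u : H` with `x : H₁`. -/
def contr (x : H₁) (u : H) : H₂ :=
  (InnerProductSpace.toDual ℂ H₂).symm <|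
    LinearMap.mkContinuous
      { toFun := fun b => ⟪u, T.tmul x b⟫_ℂ
        map_add' := fun b b' => by simp only [map_add, inner_add_right]
        map_smul' := fun c b => by
          simp only [map_smul, inner_smul_right, RingHom.id_apply, smul_eq_mul] }
      (‖u‖ * ‖x‖)
      (fun b => by
        calc ‖⟪u, T.tmul x b⟫_ℂ‖ ≤ ‖u‖ * ‖T.tmul x b‖ := norm_inner_le_norm _ _
          _ = ‖u‖ * ‖x‖ * ‖b‖ := by rw [T.norm_tmul]; ring)

lemma inner_contr (x : H₁) (u : H) (b : H₂) :
    ⟪T.contr x u, b⟫_ℂ = ⟪u, T.tmul x b⟫_ℂ := by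
  rw [contr, InnerProductSpace.toDual_symm_apply]; rfl

lemma norm_contr_le (x : H₁) (u : H) : ‖T.contr x u‖ ≤ ‖u‖ * ‖x‖ := by
  rw [contr, LinearIsometryEquiv.norm_map]
  exact LinearMap.mkContinuous_norm_le _ (by positivity) _

lemma contr_sub (x : H₁) (u u' : H) : T.contr x (u - u') = T.contr x u - T.contr x u' := by
  refine ext_inner_right ℂ fun b => ?_
  rw [inner_sub_left, T.inner_contr, T.inner_contr, T.inner_contr, inner_sub_left]

lemma contr_smul_left (c : ℂ) (x : H₁) (u : H) :
    T.contr (c • x) u = (starRingEnd ℂ c) • T.contr x u := by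
  refine ext_inner_right ℂ fun b => ?_
  have h1 : T.tmul (c • x) b = c • T.tmul x b := by rw [map_smul]; rfl
  rw [T.inner_contr, h1, inner_smul_right, inner_smul_left, T.inner_contr, Complex.conj_conj]

lemma contr_adjoint (A : H₁ →L[ℂ] H₁) (x : H₁) (u : H) :
    T.contr (ContinuousLinearMap.adjoint A x) u = T.contr x (T.map A 1 u) := by
  have hadj1 : ContinuousLinearMap.adjoint (1 : H₂ →L[ℂ] H₂) = 1 := by
    rw [← ContinuousLinearMap.star_eq_adjoint, star_one]
  refine ext_inner_right ℂ fun b => ?_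
  rw [T.inner_contr, T.inner_contr]
  have h1 : T.tmul (ContinuousLinearMap.adjoint A x) b =
      T.map (ContinuousLinearMap.adjoint A) 1 (T.tmul x b) := by
    rw [T.map_tmul]; rfl
  rw [h1]
  have h2 := T.map_adjoint_inner (ContinuousLinearMap.adjoint A) 1 (T.tmul x b) u
  rw [ContinuousLinearMap.adjoint_adjoint, hadj1] at h2
  have h3 := congr_arg (starRingEnd ℂ) h2
  rwa [inner_conj_symm, inner_conj_symm] at h3

lemma map_projSpan (ξ : H₁) (hξ : ‖ξ‖ = 1) (v : H) :
    T.map (projSpan ξ) 1 v = T.tmul ξ (T.contr ξ v) := by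
  have hadj1 : ContinuousLinearMap.adjoint (1 : H₂ →L[ℂ] H₂) = 1 := by
    rw [← ContinuousLinearMap.star_eq_adjoint, star_one]
  have hsa : IsSelfAdjoint (projSpan ξ) := isSelfAdjoint_starProjection (ℂ ∙ ξ)
  have hP : ContinuousLinearMap.adjoint (projSpan ξ) = projSpan ξ := by
    rw [← ContinuousLinearMap.star_eq_adjoint]; exact hsa.star_eq
  have key : ∀ z w : H, ⟪T.map (projSpan ξ) 1 z, w⟫_ℂ = ⟪z, T.map (projSpan ξ) 1 w⟫_ℂ := by
    intro z w; rw [T.map_adjoint_inner, hP, hadj1]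
  have hPa : ∀ a : H₁, projSpan ξ a = ⟪ξ, a⟫_ℂ • ξ := by
    intro a
    show (ℂ ∙ ξ).starProjection a = _
    rw [Submodule.starProjection_singleton, hξ]; simp
  apply T.ext_vec
  intro a b
  rw [← key (T.tmul a b) v, T.map_tmul, ContinuousLinearMap.one_apply, hPa a]
  have h1 : T.tmul (⟪ξ, a⟫_ℂ • ξ) b = ⟪ξ, a⟫_ℂ • T.tmul ξ b := by rw [map_smul]; rfl
  rw [h1, inner_smul_left, T.inner_tmul, inner_conj_symm]
  congr 1
  have h2 := congr_arg (starRingEnd ℂ) (T.inner_contr ξ v b)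
  rw [inner_conj_symm, inner_conj_symm] at h2
  exact h2.symm

end HilbertTensor

set_option maxHeartbeats 1600000 in
/-- If a unit vector `v` in the Hilbert tensor product `H₁ ⊗ H₂` is cyclic for
the first factor, then the algebra of the second factor is maximally correlated with the
algebra of the first factor in the state `v`. -/
theorem cyclicFst_imp_maxCorrSndFst
    [TopologicalSpace.SeparableSpace H₁] [TopologicalSpace.SeparableSpace H₂]
    (h₁ : 1 < Module.rank ℂ H₁) (h₂ : 1 < Module.rank ℂ H₂)
    (T : HilbertTensor H₁ H₂ H) (v : H) (hv : ‖v‖ = 1)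
    (hcyc : T.CyclicFst v) : T.MaxCorrSndFst v := by
  intro P' hP' hP'ne ε hε
  obtain ⟨hP'sa, hP'idem⟩ := hP'
  have hP'adj : ContinuousLinearMap.adjoint P' = P' := by
    rw [← ContinuousLinearMap.star_eq_adjoint]; exact hP'sa.star_eq
  have hP'PP : ∀ z : H₂, P' (P' z) = P' z := fun z => by
    have h := DFunLike.congr_fun hP'idem z; simpa using h
  have hinnerP' : ∀ z : H₂, ⟪z, P' z⟫_ℂ = (‖P' z‖ : ℂ) ^ 2 := fun z => by
    calc ⟪z, P' z⟫_ℂ = ⟪z, P' (P' z)⟫_ℂ := by rw [hP'PP]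
      _ = ⟪z, ContinuousLinearMap.adjoint P' (P' z)⟫_ℂ := by rw [hP'adj]
      _ = ⟪P' z, P' z⟫_ℂ := ContinuousLinearMap.adjoint_inner_right _ _ _
      _ = (‖P' z‖ : ℂ) ^ 2 := inner_self_eq_norm_sq_to_K _
  have hP'norm : ∀ z : H₂, ‖P' z‖ ≤ ‖z‖ := by
    intro z
    have h2 := norm_inner_le_norm (𝕜 := ℂ) z (P' z)
    rw [hinnerP'] at h2
    have h1 : (‖P' z‖ : ℝ) ^ 2 ≤ ‖z‖ * ‖P' z‖ := by
      calc (‖P' z‖ : ℝ) ^ 2 = ‖((‖P' z‖ : ℂ)) ^ 2‖ := by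
            rw [norm_pow, Complex.norm_real, norm_norm]
        _ ≤ ‖z‖ * ‖P' z‖ := h2
    rcases eq_or_lt_of_le (norm_nonneg (P' z)) with h0 | h0
    · rw [← h0]; exact norm_nonneg z
    · nlinarith
  -- a unit vector in the range of P'
  obtain ⟨z₀, hz₀⟩ : ∃ z, P' z ≠ 0 := by
    by_contra hcon
    push_neg at hcon
    exact hP'ne (ContinuousLinearMap.ext fun z => by simp [hcon z])
  have hz₀n : (0:ℝ) < ‖P' z₀‖ := norm_pos_iff.mpr hz₀
  set y : H₂ := ((‖P' z₀‖ : ℂ))⁻¹ • P' z₀ with hy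
  have hyn : ‖y‖ = 1 := by
    rw [hy, norm_smul, norm_inv, Complex.norm_real, norm_norm]
    field_simp
  have hP'y : P' y = y := by
    rw [hy, map_smul, hP'PP]
  -- a unit vector in H₁
  obtain ⟨x₀, hx₀⟩ : ∃ x : H₁, x ≠ 0 := by
    have hpos : 0 < Module.rank ℂ H₁ := lt_trans zero_lt_one h₁
    exact rank_pos_iff_exists_ne_zero.mp hpos
  have hx₀n : (0:ℝ) < ‖x₀‖ := norm_pos_iff.mpr hx₀
  set x₁ : H₁ := ((‖x₀‖ : ℂ))⁻¹ • x₀ with hx₁def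
  have hx₁ : ‖x₁‖ = 1 := by
    rw [hx₁def, norm_smul, norm_inv, Complex.norm_real, norm_norm]
    field_simp
  -- choose δ and the approximating operator A
  obtain ⟨δ, hδpos, hδ4, hδhalf⟩ : ∃ δ : ℝ, 0 < δ ∧ 4 * δ ≤ ε ∧ δ ≤ 1 / 2 :=
    ⟨min (ε / 4) (1 / 2), lt_min (by linarith) (by norm_num),
      by have := min_le_left (ε / 4) (1 / 2); linarith, min_le_right _ _⟩
  have hcyc' : DenseRange (fun A : H₁ →L[ℂ] H₁ => T.map A 1 v) := hcyc
  obtain ⟨A, hA⟩ := hcyc'.exists_dist_lt (T.tmul x₁ y) hδpos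
  have hAnorm : ‖T.map A 1 v - T.tmul x₁ y‖ < δ := by
    rw [← dist_eq_norm, dist_comm]
    exact hA
  -- the contraction of v along A† x₁
  have hcy : T.contr x₁ (T.tmul x₁ y) = y := by
    refine ext_inner_right ℂ fun b => ?_
    rw [T.inner_contr, T.inner_tmul, inner_self_eq_norm_sq_to_K, hx₁]
    norm_num
  set η : H₁ := ContinuousLinearMap.adjoint A x₁ with hη
  set w₀ : H₂ := T.contr x₁ (T.map A 1 v) with hw₀
  have hw₀η : T.contr η v = w₀ := T.contr_adjoint A x₁ v
  have hw₀y : ‖w₀ - y‖ < δ := by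
    have hsub : w₀ - y = T.contr x₁ (T.map A 1 v - T.tmul x₁ y) := by
      rw [T.contr_sub, hcy, hw₀]
    rw [hsub]
    calc ‖T.contr x₁ (T.map A 1 v - T.tmul x₁ y)‖
        ≤ ‖T.map A 1 v - T.tmul x₁ y‖ * ‖x₁‖ := T.norm_contr_le _ _
      _ = ‖T.map A 1 v - T.tmul x₁ y‖ := by rw [hx₁, mul_one]
      _ < δ := hAnorm
  have hw₀lb : 1 - δ ≤ ‖w₀‖ := by
    have h := norm_sub_norm_le y w₀
    rw [norm_sub_rev] at h
    linarith [hyn ▸ h]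
  have hw₀pos : (0:ℝ) < ‖w₀‖ := by linarith
  have hw₀ne : w₀ ≠ 0 := norm_pos_iff.mp hw₀pos
  have hηne : η ≠ 0 := by
    intro h0
    apply hw₀ne
    rw [← hw₀η, h0]
    refine ext_inner_right ℂ fun b => ?_
    rw [T.inner_contr]
    simp
  have hw₀ub : ‖w₀‖ ≤ 1 + δ := by
    have h := norm_sub_norm_le w₀ y
    linarith [hyn ▸ h]
  have hPw₀lb : 1 - δ ≤ ‖P' w₀‖ := by
    have h1 : ‖P' w₀ - y‖ ≤ δ := by
      have hre : P' w₀ - y = P' (w₀ - y) := by rw [map_sub, hP'y]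
      rw [hre]
      exact le_of_lt (lt_of_le_of_lt (hP'norm _) hw₀y)
    have h2 := norm_sub_norm_le y (P' w₀)
    rw [norm_sub_rev] at h2
    linarith [hyn ▸ h2]
  -- the unit vector ξ and the vector w
  have hr : (0:ℝ) < ‖η‖ := norm_pos_iff.mpr hηne
  set ξ : H₁ := ((‖η‖ : ℂ))⁻¹ • η with hξdef
  have hξnorm : ‖ξ‖ = 1 := by
    rw [hξdef, norm_smul, norm_inv, Complex.norm_real, norm_norm]
    field_simp
  have hξne : ξ ≠ 0 := by
    intro h0; rw [h0, norm_zero] at hξnorm; norm_num at hξnorm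
  set w : H₂ := T.contr ξ v with hwdef
  have hwval : w = ((‖η‖ : ℂ))⁻¹ • w₀ := by
    rw [hwdef, hξdef, T.contr_smul_left, hw₀η, map_inv₀, Complex.conj_ofReal]
  have hwnorm : ‖w‖ = ‖η‖⁻¹ * ‖w₀‖ := by
    rw [hwval, norm_smul, norm_inv, Complex.norm_real, norm_norm]
  have hPwval : P' w = ((‖η‖ : ℂ))⁻¹ • P' w₀ := by rw [hwval, map_smul]
  have hPwnorm : ‖P' w‖ = ‖η‖⁻¹ * ‖P' w₀‖ := by
    rw [hPwval, norm_smul, norm_inv, Complex.norm_real, norm_norm]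
  have hwpos : (0:ℝ) < ‖w‖ := by
    rw [hwnorm]; exact mul_pos (inv_pos.mpr hr) hw₀pos
  -- the projection P
  have hPa : ∀ a : H₁, projSpan ξ a = ⟪ξ, a⟫_ℂ • ξ := by
    intro a
    show (ℂ ∙ ξ).starProjection a = _
    rw [Submodule.starProjection_singleton, hξnorm]; simp
  have honeξ : ⟪ξ, ξ⟫_ℂ = 1 := by
    rw [inner_self_eq_norm_sq_to_K, hξnorm]; norm_num
  have hPξ : projSpan ξ ξ = ξ := by rw [hPa, honeξ, one_smul]
  -- key inner product computations
  have hkey1 : ⟪v, T.map (projSpan ξ) 1 v⟫_ℂ = (‖w‖ : ℂ) ^ 2 := by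
    rw [T.map_projSpan ξ hξnorm v, ← hwdef, ← T.inner_contr, ← hwdef,
      inner_self_eq_norm_sq_to_K]
    norm_cast
  have hcompP : T.map (projSpan ξ) P' = (T.map 1 P') ∘L (T.map (projSpan ξ) 1) := by
    rw [T.map_comp]
    congr 1 <;> simp [ContinuousLinearMap.one_def]
  have hkey2 : ⟪v, T.map (projSpan ξ) P' v⟫_ℂ = (‖P' w‖ : ℂ) ^ 2 := by
    rw [hcompP, ContinuousLinearMap.comp_apply, T.map_projSpan ξ hξnorm v, ← hwdef,
      T.map_tmul, ContinuousLinearMap.one_apply, ← T.inner_contr, ← hwdef, hinnerP']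
  -- final estimate
  clear_value y x₁ η w₀ ξ w
  have hstep : (1 - ε) * ‖w₀‖ ^ 2 ≤ ‖P' w₀‖ ^ 2 := by
    rcases le_or_gt (1 - ε) 0 with hc | hc
    · nlinarith [sq_nonneg ‖w₀‖, sq_nonneg ‖P' w₀‖]
    · have ha1 : (1 - ε) * ‖w₀‖ ^ 2 ≤ (1 - ε) * (1 + δ) ^ 2 := by
        apply mul_le_mul_of_nonneg_left _ hc.le
        apply pow_le_pow_left₀ (norm_nonneg _) hw₀ub 2
      have ha2 : (1 - ε) * (1 + δ) ^ 2 ≤ (1 - δ) ^ 2 := by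
        nlinarith [hδ4, hδpos.le, hε.le, sq_nonneg δ]
      have ha3 : (1 - δ) ^ 2 ≤ ‖P' w₀‖ ^ 2 := by
        apply pow_le_pow_left₀ (by linarith) hPw₀lb 2
      linarith
  have hgoal : (1 - ε) * ‖w‖ ^ 2 ≤ ‖P' w‖ ^ 2 := by
    rw [hwnorm, hPwnorm]
    have hinv : (0:ℝ) ≤ (‖η‖⁻¹) ^ 2 := sq_nonneg _
    calc (1 - ε) * (‖η‖⁻¹ * ‖w₀‖) ^ 2 = (‖η‖⁻¹) ^ 2 * ((1 - ε) * ‖w₀‖ ^ 2) := by ring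
      _ ≤ (‖η‖⁻¹) ^ 2 * ‖P' w₀‖ ^ 2 := mul_le_mul_of_nonneg_left hstep hinv
      _ = (‖η‖⁻¹ * ‖P' w₀‖) ^ 2 := by ring
  refine ⟨projSpan ξ, ⟨isSelfAdjoint_starProjection (ℂ ∙ ξ), ?_⟩, ?_, ?_, ?_⟩
  · ext x
    simp [projSpan, Submodule.orthogonalProjectionOnto_mem_subspace_eq_self]
    exact Submodule.starProjection_eq_self_iff.mpr (Submodule.starProjection_apply_mem _ _)
  · intro h0
    rw [h0] at hPξ
    simp at hPξ
    exact hξne hPξ.symm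
  · rw [hkey1, ← Complex.ofReal_pow, Complex.ofReal_re]
    exact pow_pos hwpos 2
  · rw [hkey1, hkey2, ← Complex.ofReal_pow, ← Complex.ofReal_pow,
      Complex.ofReal_re, Complex.ofReal_re]
    exact hgoal

end
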